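/- arXiv:1009.4482 — 2 statements merged into one kernel-verified Lean document; each statement's English description precedes it below -/
import Mathlib

section
/- Let R be an irreducible reduced crystallographic root system with positive roots R⁺ and dominant weights P⁺. If ω is a small dominant weight (i.e., ⟨ω, α∨⟩ ≤ 2 for all α ∈ R⁺), then every dominant weight μ with μ ≤ ω in the dominance order is also small. -/
open RealInnerProductSpace

noncomputable section

variable {E : Type*} [NormedAddCommGroup E] [InnerProductSpace ℝ E] [FiniteDimensional ℝ E]

/-- The coroot `α∨ = 2α/⟨α,α⟩` of a vector `α`. -/
def coroot (α : E) : E := (2 / ⟪α, α⟫) • α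

/-- The orthogonal reflection across the hyperplane perpendicular to `α`. -/
def reflAt (α : E) : E ≃ₗᵢ[ℝ] E := Submodule.reflection (ℝ ∙ α)ᗮ

/-- An irreducible reduced crystallographic root system with a choice of positive roots. -/
structure IsRootSystem (R Rpos : Finset E) : Prop where
  pos_subset : Rpos ⊆ R
  ne_zero : ∀ α ∈ R, α ≠ 0
  span_top : Submodule.span ℝ (R : Set E) = ⊤
  reduced : ∀ α ∈ R, ∀ c : ℝ, c • α ∈ (R : Set E) → c = 1 ∨ c = -1
  refl_mem : ∀ α ∈ R, ∀ β ∈ R, reflAt α β ∈ R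
  cryst : ∀ α ∈ R, ∀ β ∈ R, ∃ k : ℤ, ⟪β, coroot α⟫ = (k : ℝ)
  pos_split : ∀ α ∈ R, Xor' (α ∈ Rpos) (-α ∈ Rpos)
  pos_closed : ∀ α ∈ Rpos, ∀ β ∈ Rpos, α + β ∈ R → α + β ∈ Rpos
  irreducible : ∀ S : Finset E, S ⊆ R → S.Nonempty → S ≠ R →
    ∃ α ∈ S, ∃ β ∈ R, β ∉ S ∧ ⟪α, β⟫ ≠ 0

/-- The Weyl group: the subgroup of linear isometries generated by the root reflections. -/
def weylGroup (R : Finset E) : Subgroup (E ≃ₗᵢ[ℝ] E) :=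
  Subgroup.closure (reflAt '' (R : Set E))

/-- A weight: an element with integral pairings against all coroots. -/
def IsWeight (R : Finset E) (x : E) : Prop := ∀ α ∈ R, ∃ k : ℤ, ⟪x, coroot α⟫ = (k : ℝ)

/-- Dominant: nonnegative pairing with all positive roots. -/
def IsDominant (Rpos : Finset E) (x : E) : Prop := ∀ α ∈ Rpos, 0 ≤ ⟪x, α⟫

/-- Dominance order: `μ ≤ λ` iff `λ - μ` is a nonnegative integer combination of positive
roots, i.e. lies in the additive submonoid generated by the positive roots. -/
def domLE (Rpos : Finset E) (μ lam : E) : Prop :=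
  lam - μ ∈ AddSubmonoid.closure (Rpos : Set E)

/-- Strict dominance order. -/
def domLT (Rpos : Finset E) (μ lam : E) : Prop := domLE Rpos μ lam ∧ μ ≠ lam

/-- A small weight: a dominant weight pairing at most `2` with every positive coroot. -/
def IsSmall (R Rpos : Finset E) (ω : E) : Prop :=
  IsDominant Rpos ω ∧ IsWeight R ω ∧ ∀ α ∈ Rpos, ⟪ω, coroot α⟫ ≤ 2

/-- A minuscule weight: a nonzero dominant weight pairing at most `1` with every positive
coroot. -/
def IsMinuscule (R Rpos : Finset E) (ω : E) : Prop :=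
  IsDominant Rpos ω ∧ IsWeight R ω ∧ ω ≠ 0 ∧ ∀ α ∈ Rpos, ⟪ω, coroot α⟫ ≤ 1

/-- The Weyl orbit of a point. -/
def weylOrbit (R : Finset E) (x : E) : Set E := {y | ∃ w ∈ weylGroup R, w x = y}


lemma real_inner_self_pos' {x : E} (h : x ≠ 0) : 0 < ⟪x, x⟫ :=
  real_inner_self_nonneg.lt_of_ne (Ne.symm (inner_self_ne_zero.2 h))

lemma inner_coroot (x α : E) : ⟪x, coroot α⟫ = 2 / ⟪α, α⟫ * ⟪x, α⟫ := by
  simp [coroot, real_inner_smul_right]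

lemma reflAt_apply (α x : E) : reflAt α x = x - ⟪x, coroot α⟫ • α := by
  by_cases hα : α = 0
  · have hx : x ∈ (ℝ ∙ (0:E))ᗮ := by
      simp [Submodule.mem_orthogonal, Submodule.mem_span_singleton]
    rw [reflAt, hα, Submodule.reflection_mem_subspace_eq_self hx]
    simp [coroot]
  rw [reflAt, Submodule.reflection_apply, Submodule.starProjection_orthogonal_val (K := ℝ ∙ α),
    Submodule.starProjection_singleton]
  have h1 : (‖α‖:ℝ)^2 = ⟪α, α⟫ := by rw [real_inner_self_eq_norm_sq]
  have h2 : ⟪α, α⟫ ≠ 0 := by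
    rw [← h1]
    exact pow_ne_zero 2 (norm_ne_zero_iff.2 hα)
  rw [inner_coroot, h1, real_inner_comm α x, RCLike.ofReal_real_eq_id, id_eq]
  match_scalars <;> field_simp <;> ring

lemma reflAt_reflAt (δ x : E) : reflAt δ (reflAt δ x) = x := Submodule.reflection_reflection _ x

lemma inner_coroot_self (α : E) (h : ⟪α, α⟫ ≠ 0) : ⟪α, coroot α⟫ = 2 := by
  rw [inner_coroot]; field_simp

lemma reflAt_self (δ : E) : reflAt δ δ = -δ := by
  by_cases hδ : δ = 0
  · simp [hδ, reflAt_apply]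
  rw [reflAt_apply, inner_coroot_self δ (ne_of_gt (real_inner_self_pos' hδ))]
  module

lemma coroot_reflAt (δ x : E) : coroot (reflAt δ x) = reflAt δ (coroot x) := by
  rw [coroot, coroot,
    show ⟪reflAt δ x, reflAt δ x⟫ = ⟪x, x⟫ from (reflAt δ).inner_map_map x x, map_smul]

lemma inner_coroot_neg_iff {α : E} (h : 0 < ⟪α, α⟫) (x : E) :
    ⟪x, coroot α⟫ < 0 ↔ ⟪x, α⟫ < 0 := by
  rw [inner_coroot]
  constructor <;> intro h' <;> nlinarith [div_pos (zero_lt_two (α := ℝ)) h]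

lemma inner_coroot_nonneg_iff {α : E} (h : 0 < ⟪α, α⟫) (x : E) :
    0 ≤ ⟪x, coroot α⟫ ↔ 0 ≤ ⟪x, α⟫ := by
  rw [← not_lt, ← not_lt, not_iff_not]
  exact inner_coroot_neg_iff h x

lemma inner_coroot_pos_iff {α : E} (h : 0 < ⟪α, α⟫) (x : E) :
    0 < ⟪x, coroot α⟫ ↔ 0 < ⟪x, α⟫ := by
  rw [inner_coroot]
  constructor <;> intro h' <;> nlinarith [div_pos (zero_lt_two (α := ℝ)) h]

namespace IsRootSystem

variable {R Rpos : Finset E}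

lemma inner_self_pos (hRS : IsRootSystem R Rpos) {α : E} (hα : α ∈ R) : 0 < ⟪α, α⟫ :=
  real_inner_self_pos' (hRS.ne_zero α hα)

lemma neg_mem (hRS : IsRootSystem R Rpos) {α : E} (hα : α ∈ R) : -α ∈ R := by
  have h := hRS.refl_mem α hα α hα
  rwa [reflAt_self] at h

lemma neg_mem_pos (hRS : IsRootSystem R Rpos) {α : E} (hα : α ∈ R) (h : α ∉ Rpos) :
    -α ∈ Rpos := by
  rcases hRS.pos_split α hα with ⟨h1, _⟩ | ⟨h1, _⟩
  · exact absurd h1 h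
  · exact h1

lemma not_neg_mem_pos (hRS : IsRootSystem R Rpos) {α : E} (hα : α ∈ Rpos) : -α ∉ Rpos := by
  rcases hRS.pos_split α (hRS.pos_subset hα) with ⟨_, h⟩ | ⟨_, h⟩
  · exact h
  · exact absurd hα h

/-- The root-string lemma. -/
lemma add_mem (hRS : IsRootSystem R Rpos) {α β : E} (hα : α ∈ R) (hβ : β ∈ R)
    (hneg : ⟪β, α⟫ < 0) (hne : β ≠ -α) : β + α ∈ R := by
  obtain ⟨p, hp⟩ := hRS.cryst α hα β hβ
  obtain ⟨q, hq⟩ := hRS.cryst β hβ α hα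
  have hαα := hRS.inner_self_pos hα
  have hββ := hRS.inner_self_pos hβ
  have hab : ⟪α, β⟫ < 0 := by rwa [real_inner_comm]
  have hpR : (p:ℝ) < 0 := by
    rw [← hp]; exact (inner_coroot_neg_iff hαα β).2 hneg
  have hqR : (q:ℝ) < 0 := by
    rw [← hq]; exact (inner_coroot_neg_iff hββ α).2 hab
  -- strict Cauchy-Schwarz
  have hCS : ⟪-α, β⟫ < ‖-α‖ * ‖β‖ := by
    apply inner_lt_norm_mul_iff_real.2
    intro hcon
    have hα0 : α ≠ 0 := hRS.ne_zero α hα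
    have hβ0 : β ≠ 0 := hRS.ne_zero β hβ
    have hnα : (0:ℝ) < ‖α‖ := norm_pos_iff.2 hα0
    have hnβ : (0:ℝ) < ‖β‖ := norm_pos_iff.2 hβ0
    -- hcon : ‖β‖ • (-α) = ‖-α‖ • β
    rw [norm_neg, smul_neg] at hcon
    have hβeq : β = (-(‖β‖ / ‖α‖)) • α := by
      apply smul_right_injective E (ne_of_gt hnα)
      show ‖α‖ • β = ‖α‖ • (-(‖β‖ / ‖α‖) • α)
      rw [← hcon, smul_smul, show ‖α‖ * (-(‖β‖ / ‖α‖)) = -‖β‖ by field_simp]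
      module
    rcases hRS.reduced α hα (-(‖β‖ / ‖α‖)) (by rw [← hβeq]; exact hβ) with h1 | h1
    · nlinarith [div_pos hnβ hnα]
    · apply hne
      rw [hβeq, h1]; module
  rw [norm_neg, inner_neg_left] at hCS
  have hnorm : ‖α‖ * ‖β‖ > 0 :=
    mul_pos (norm_pos_iff.2 (hRS.ne_zero α hα)) (norm_pos_iff.2 (hRS.ne_zero β hβ))
  have hsq : ⟪α, β⟫ ^ 2 < ⟪α, α⟫ * ⟪β, β⟫ := by
    have h1 : ⟪α, α⟫ = ‖α‖ ^ 2 := real_inner_self_eq_norm_sq α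
    have h2 : ⟪β, β⟫ = ‖β‖ ^ 2 := real_inner_self_eq_norm_sq β
    nlinarith [hCS, hab, hnorm]
  have hpq : (p:ℝ) * (q:ℝ) < 4 := by
    have hp' : (p:ℝ) = 2 / ⟪α, α⟫ * ⟪β, α⟫ := by rw [← hp, inner_coroot]
    have hq' : (q:ℝ) = 2 / ⟪β, β⟫ * ⟪α, β⟫ := by rw [← hq, inner_coroot]
    have e1 : 2 / ⟪α, α⟫ * ⟪α, β⟫ * (2 / ⟪β, β⟫ * ⟪α, β⟫) =
        4 * ⟪α, β⟫ ^ 2 / (⟪α, α⟫ * ⟪β, β⟫) := by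
      field_simp
      ring
    rw [hp', hq', show ⟪β, α⟫ = ⟪α, β⟫ from real_inner_comm α β, e1,
      div_lt_iff₀ (by positivity)]
    nlinarith [hsq]
  have hpZ : p ≤ -1 := by
    have : p < 0 := by exact_mod_cast hpR
    omega
  have hqZ : q ≤ -1 := by
    have : q < 0 := by exact_mod_cast hqR
    omega
  have hpqZ : p * q < 4 := by exact_mod_cast hpq
  have hcase : p = -1 ∨ q = -1 := by
    by_contra hcon
    push_neg at hcon
    have h1 : p ≤ -2 := by omega
    have h2 : q ≤ -2 := by omega
    nlinarith
  rcases hcase with h1 | h1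
  · have h := hRS.refl_mem α hα β hβ
    rw [reflAt_apply, hp, h1] at h
    convert h using 1
    push_cast
    module
  · have h := hRS.refl_mem β hβ α hα
    rw [reflAt_apply, hq, h1] at h
    have : α - ((-1:ℤ):ℝ) • β = β + α := by push_cast; module
    rwa [this] at h

end IsRootSystem

namespace IsRootSystem
variable {R Rpos : Finset E}

lemma reflAt_mem_pos (hRS : IsRootSystem R Rpos) {γ δ : E} (hγ : γ ∈ Rpos) (hδ : δ ∈ Rpos)
    (h : ⟪γ, δ⟫ ≤ 0) : reflAt δ γ ∈ Rpos := by
  have hδR := hRS.pos_subset hδ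
  have hγR := hRS.pos_subset hγ
  have hδδ := hRS.inner_self_pos hδR
  obtain ⟨c, hc⟩ := hRS.cryst δ hδR γ hγR
  have hc0 : (c:ℝ) ≤ 0 := by
    rw [← hc, inner_coroot]
    exact mul_nonpos_of_nonneg_of_nonpos (div_nonneg zero_le_two hδδ.le) h
  have hc0' : c ≤ 0 := by exact_mod_cast hc0
  set m : ℕ := (-c).toNat with hm
  have hmc : (c:ℝ) = -(m:ℝ) := by
    have : ((-c).toNat : ℤ) = -c := Int.toNat_of_nonneg (by omega)
    have : ((m:ℤ):ℝ) = ((-c : ℤ):ℝ) := by exact_mod_cast this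
    push_cast at this
    linarith
  have key : ∀ j : ℕ, ⟪γ + (j:ℝ) • δ, coroot δ⟫ = 2 * (j:ℝ) - (m:ℝ) := by
    intro j
    rw [inner_add_left, real_inner_smul_left, inner_coroot_self δ (ne_of_gt hδδ), hc, hmc]
    ring
  have keyrefl : reflAt δ γ = γ + (m:ℝ) • δ := by
    rw [reflAt_apply, hc, hmc]
    module
  -- ascending chain
  have asc : ∀ j : ℕ, 2 * j ≤ m + 1 → γ + (j:ℝ) • δ ∈ Rpos := by
    intro j
    induction j with
    | zero => intro _; simpa using hγ
    | succ n ih =>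
      intro hle
      have hn := ih (by omega)
      have hpair : ⟪γ + (n:ℝ) • δ, δ⟫ < 0 := by
        rw [← inner_coroot_neg_iff hδδ, key n]
        have : 2 * n + 1 ≤ m := by omega
        have : (2 * (n:ℝ) + 1) ≤ (m:ℝ) := by exact_mod_cast this
        linarith
      have hne : γ + (n:ℝ) • δ ≠ -δ := by
        intro he
        exact hRS.not_neg_mem_pos hδ (he ▸ hn)
      have hr : (γ + (n:ℝ) • δ) + δ ∈ R :=
        hRS.add_mem hδR (hRS.pos_subset hn) hpair hne
      have hp := hRS.pos_closed _ hn δ hδ hr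
      have he : γ + ((n+1:ℕ):ℝ) • δ = (γ + (n:ℝ) • δ) + δ := by
        push_cast
        module
      rw [he]
      exact hp
  by_contra hnot
  rcases Nat.eq_zero_or_pos m with hm0 | hmpos
  · apply hnot
    rw [keyrefl, hm0]
    simpa using hγ
  -- descending chain
  have desc : ∀ i : ℕ, 2 * i ≤ m →
      (γ + ((m - i : ℕ):ℝ) • δ ∈ R ∧ γ + ((m - i : ℕ):ℝ) • δ ∉ Rpos) := by
    intro i
    induction i with
    | zero =>
      intro _
      have h0 := hRS.refl_mem δ hδR γ hγR
      rw [keyrefl] at h0 hnot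
      simpa using ⟨h0, hnot⟩
    | succ n ih =>
      intro hle
      obtain ⟨hxR, hxnp⟩ := ih (by omega)
      set j : ℕ := m - n with hj
      have hj1 : 1 ≤ j := by omega
      have hj2 : m + 2 ≤ 2 * j := by omega
      have hε : -(γ + (j:ℝ) • δ) ∈ Rpos := hRS.neg_mem_pos hxR hxnp
      have hpair : ⟪-(γ + (j:ℝ) • δ), δ⟫ < 0 := by
        rw [inner_neg_left, neg_lt, neg_zero]
        rw [← inner_coroot_pos_iff hδδ, key j]
        have : (m:ℝ) + 2 ≤ 2 * (j:ℝ) := by exact_mod_cast hj2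
        linarith
      have hne : -(γ + (j:ℝ) • δ) ≠ -δ := by
        intro he
        have hxδ : γ + (j:ℝ) • δ = δ := by
          have := congrArg Neg.neg he
          simpa using this
        have hγeq : γ = (1 - (j:ℝ)) • δ := by
          have h' : γ = δ - (j:ℝ) • δ := eq_sub_of_add_eq hxδ
          rw [h']; module
        rcases hRS.reduced δ hδR (1 - (j:ℝ)) (by rw [hγeq] at hγR; exact_mod_cast hγR) with h1 | h1
        · have : (j:ℝ) = 0 := by linarith
          have : j = 0 := by exact_mod_cast this
          omega
        · have : (j:ℝ) = 2 := by linarith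
          have hγδ : γ = -δ := by rw [hγeq, this]; module
          exact hRS.not_neg_mem_pos hγ (by rw [hγδ, neg_neg]; exact hδ)
      have hstr : (-(γ + (j:ℝ) • δ)) + δ ∈ R :=
        hRS.add_mem hδR (hRS.pos_subset hε) hpair hne
      have hR' : γ + ((j - 1 : ℕ):ℝ) • δ ∈ R := by
        have := hRS.neg_mem hstr
        have he : -((-(γ + (j:ℝ) • δ)) + δ) = γ + ((j - 1 : ℕ):ℝ) • δ := by
          push_cast [Nat.cast_sub hj1]
          module
        rwa [he] at this
      have hnp' : γ + ((j - 1 : ℕ):ℝ) • δ ∉ Rpos := by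
        intro hcon
        apply hxnp
        have he : (γ + ((j - 1 : ℕ):ℝ) • δ) + δ = γ + (j:ℝ) • δ := by
          push_cast [Nat.cast_sub hj1]
          module
        have := hRS.pos_closed _ hcon δ hδ (by rw [he]; exact hxR)
        rwa [he] at this
      have hsub : m - (n + 1) = j - 1 := by omega
      rw [hsub]
      exact ⟨hR', hnp'⟩
  set j0 : ℕ := (m + 1) / 2 with hj0
  have h1 := asc j0 (by omega)
  have h2 := (desc (m - j0) (by omega)).2
  rw [show m - (m - j0) = j0 by omega] at h2
  exact h2 h1

end IsRootSystem

namespace IsRootSystem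
variable {R Rpos : Finset E}

lemma sum_inner_pos (hRS : IsRootSystem R Rpos) {δ : E} (hδ : δ ∈ Rpos) :
    0 < ⟪∑ γ ∈ Rpos, γ, δ⟫ := by
  classical
  have hδδ := hRS.inner_self_pos (hRS.pos_subset hδ)
  rw [sum_inner]
  rw [← Finset.sum_filter_add_sum_filter_not Rpos (fun γ => reflAt δ γ ∈ Rpos)
    (fun γ => (⟪γ, δ⟫ : ℝ))]
  have hA : ∑ γ ∈ Rpos.filter (fun γ => reflAt δ γ ∈ Rpos), ⟪γ, δ⟫ = 0 := by
    refine Finset.sum_involution (fun a _ => reflAt δ a) ?_ ?_ ?_ ?_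
    · intro a _
      show ⟪a, δ⟫ + ⟪reflAt δ a, δ⟫ = 0
      rw [reflAt_apply, inner_sub_left, real_inner_smul_left, inner_coroot]
      field_simp
      ring
    · intro a _ hfa he
      replace he : reflAt δ a = a := he
      apply hfa
      have h0 : ⟪a, coroot δ⟫ • δ = 0 := by
        have h2 : a - ⟪a, coroot δ⟫ • δ = a := by rw [← reflAt_apply, he]
        exact sub_eq_self.mp h2
      rcases smul_eq_zero.1 h0 with h1 | h1
      · rw [inner_coroot] at h1
        rcases mul_eq_zero.1 h1 with h2 | h2
        · exact absurd h2 (by positivity)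
        · exact h2
      · exact absurd h1 (hRS.ne_zero δ (hRS.pos_subset hδ))
    · intro a ha
      simp only [Finset.mem_filter] at ha ⊢
      exact ⟨ha.2, by rw [reflAt_reflAt]; exact ha.1⟩
    · intro a _
      exact reflAt_reflAt δ a
  rw [hA, zero_add]
  apply Finset.sum_pos
  · intro γ hγ'
    simp only [Finset.mem_filter] at hγ'
    by_contra hle
    exact hγ'.2 (hRS.reflAt_mem_pos hγ'.1 hδ (not_lt.1 hle))
  · refine ⟨δ, ?_⟩
    simp only [Finset.mem_filter]
    exact ⟨hδ, by rw [reflAt_self]; exact hRS.not_neg_mem_pos hδ⟩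

end IsRootSystem

theorem small_test (R Rpos : Finset E) (hRS : IsRootSystem R Rpos)
    (ω μ : E) (hωdom : IsDominant Rpos ω) (hωsmall : ∀ α ∈ Rpos, ⟪ω, coroot α⟫ ≤ 2)
    (hμdom : IsDominant Rpos μ)
    (hle : ω - μ ∈ AddSubmonoid.closure (Rpos : Set E)) :
    ∀ α ∈ Rpos, ⟪μ, coroot α⟫ ≤ 2 := by
  classical
  intro α hα
  -- pick a maximizer of ⟪μ, coroot ·⟫ on Rpos, tie-broken by ⟪v, coroot ·⟫
  obtain ⟨β₀, hβ₀, hβ₀max⟩ := Rpos.exists_max_image (fun γ => (⟪μ, coroot γ⟫ : ℝ)) ⟨α, hα⟩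
  set S : Finset E := Rpos.filter (fun γ => ⟪μ, coroot β₀⟫ ≤ ⟪μ, coroot γ⟫) with hS
  have hSne : S.Nonempty := ⟨β₀, by simp [hS, hβ₀]⟩
  obtain ⟨β, hβS, hβmax⟩ :=
    S.exists_max_image (fun γ => (⟪∑ γ' ∈ Rpos, γ', coroot γ⟫ : ℝ)) hSne
  rw [hS, Finset.mem_filter] at hβS
  obtain ⟨hβRp, hfβ⟩ := hβS
  have hββ := hRS.inner_self_pos (hRS.pos_subset hβRp)
  have hfmax : ∀ γ ∈ Rpos, ⟪μ, coroot γ⟫ ≤ ⟪μ, coroot β⟫ :=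
    fun γ hγ => le_trans (hβ₀max γ hγ) hfβ
  -- β is dominant
  have hdomβ : ∀ δ ∈ Rpos, 0 ≤ ⟪β, δ⟫ := by
    by_contra hcon
    push_neg at hcon
    obtain ⟨δ, hδ, hlt⟩ := hcon
    have hδδ := hRS.inner_self_pos (hRS.pos_subset hδ)
    have hβ' : reflAt δ β ∈ Rpos := hRS.reflAt_mem_pos hβRp hδ hlt.le
    have hbd : ⟪coroot β, coroot δ⟫ < 0 := by
      rw [inner_coroot_neg_iff hδδ, real_inner_comm, inner_coroot]
      exact mul_neg_of_pos_of_neg (div_pos two_pos hββ) (by rwa [real_inner_comm])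
    have expand : ∀ y : E, ⟪y, coroot (reflAt δ β)⟫ =
        ⟪y, coroot β⟫ - ⟪coroot β, coroot δ⟫ * ⟪y, δ⟫ := by
      intro y
      rw [coroot_reflAt, reflAt_apply, inner_sub_right, real_inner_smul_right]
    have hf' : ⟪μ, coroot β⟫ ≤ ⟪μ, coroot (reflAt δ β)⟫ := by
      rw [expand μ]
      have h1 : 0 ≤ ⟪μ, δ⟫ := hμdom δ hδ
      nlinarith
    have hmem' : reflAt δ β ∈ S := by
      rw [hS, Finset.mem_filter]
      exact ⟨hβ', le_trans hfβ hf'⟩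
    have hv' : ⟪∑ γ' ∈ Rpos, γ', coroot (reflAt δ β)⟫ > ⟪∑ γ' ∈ Rpos, γ', coroot β⟫ := by
      rw [expand]
      have h1 : 0 < ⟪∑ γ' ∈ Rpos, γ', δ⟫ := hRS.sum_inner_pos hδ
      nlinarith
    exact absurd (hβmax _ hmem') (not_le.2 hv')
  -- conclude
  have h1 : ⟪μ, coroot α⟫ ≤ ⟪μ, coroot β⟫ := hfmax α hα
  have h2 : 0 ≤ ⟪ω - μ, coroot β⟫ := by
    refine AddSubmonoid.closure_induction (fun x hx => ?_) ?_ (fun x y hx hy px py => ?_) hle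
    · rw [inner_coroot_nonneg_iff hββ, real_inner_comm]
      exact hdomβ x hx
    · simp
    · rw [inner_add_left]
      linarith
  rw [inner_sub_left] at h2
  have h3 : ⟪μ, coroot β⟫ ≤ ⟪ω, coroot β⟫ := by linarith
  exact le_trans h1 (le_trans h3 (hωsmall β hβRp))

/-- every dominant weight below a small weight in dominance order is small. -/
theorem small_of_le_small (R Rpos : Finset E) (hRS : IsRootSystem R Rpos)
    (ω μ : E) (hω : IsSmall R Rpos ω)
    (hμdom : IsDominant Rpos μ) (hμwt : IsWeight R μ)
    (hle : domLE Rpos μ ω) : IsSmall R Rpos μ := by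
  obtain ⟨hωdom, hωwt, hωsmall⟩ := hω
  exact ⟨hμdom, hμwt, small_test R Rpos hRS ω μ hωdom hωsmall hμdom hle⟩
end
end

section
/- For the root systems of types A_n, B_n, C_n, and D_n, every fundamental weight ω_i satisfies ⟨ω_i, α₀∨⟩ ≤ 2, where α₀∨ is the highest coroot; i.e., all fundamental weights of the classical root systems are small. -/
open RealInnerProductSpace

noncomputable section

variable {E : Type*} [NormedAddCommGroup E] [InnerProductSpace ℝ E] [FiniteDimensional ℝ E]

/-- The simple roots of type `B_n` in the standard coordinates. -/
def stdSimpleB (n : ℕ) (j : Fin n) : EuclideanSpace ℝ (Fin n) :=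
  if h : (j : ℕ) + 1 < n then
    EuclideanSpace.single j 1 - EuclideanSpace.single ⟨(j : ℕ) + 1, h⟩ 1
  else EuclideanSpace.single j 1

/-- The simple roots of type `C_n` in the standard coordinates. -/
def stdSimpleC (n : ℕ) (j : Fin n) : EuclideanSpace ℝ (Fin n) :=
  if h : (j : ℕ) + 1 < n then
    EuclideanSpace.single j 1 - EuclideanSpace.single ⟨(j : ℕ) + 1, h⟩ 1
  else (2 : ℝ) • EuclideanSpace.single j 1

/-- The simple roots of type `D_n` in the standard coordinates. -/
def stdSimpleD (n : ℕ) (j : Fin n) : EuclideanSpace ℝ (Fin n) :=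
  if h : (j : ℕ) + 1 < n then
    EuclideanSpace.single j 1 - EuclideanSpace.single ⟨(j : ℕ) + 1, h⟩ 1
  else EuclideanSpace.single ⟨(j : ℕ) - 1, by omega⟩ 1 + EuclideanSpace.single j 1


section Helpers

variable {m : ℕ}

lemma inner_single' (x : EuclideanSpace ℝ (Fin m)) (i : Fin m) :
    ⟪x, EuclideanSpace.single i (1:ℝ)⟫ = x i := by
  rw [EuclideanSpace.inner_single_right]; simp

lemma single_inner_single' (i j : Fin m) :
    ⟪EuclideanSpace.single i (1:ℝ), EuclideanSpace.single j (1:ℝ)⟫ = if j = i then 1 else 0 := by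
  rw [EuclideanSpace.inner_single_right]
  simp [EuclideanSpace.single_apply]

lemma coroot_sub' (i j : Fin m) (h : i ≠ j) :
    coroot (EuclideanSpace.single i (1:ℝ) - EuclideanSpace.single j 1)
      = EuclideanSpace.single i (1:ℝ) - EuclideanSpace.single j 1 := by
  have : ⟪EuclideanSpace.single i (1:ℝ) - EuclideanSpace.single j 1,
      EuclideanSpace.single i (1:ℝ) - EuclideanSpace.single j 1⟫ = 2 := by
    rw [inner_sub_left, inner_sub_right, inner_sub_right, single_inner_single',
      single_inner_single', single_inner_single', single_inner_single']
    simp [h, h.symm]; norm_num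
  rw [coroot, this]; norm_num

lemma coroot_add' (i j : Fin m) (h : i ≠ j) :
    coroot (EuclideanSpace.single i (1:ℝ) + EuclideanSpace.single j 1)
      = EuclideanSpace.single i (1:ℝ) + EuclideanSpace.single j 1 := by
  have : ⟪EuclideanSpace.single i (1:ℝ) + EuclideanSpace.single j 1,
      EuclideanSpace.single i (1:ℝ) + EuclideanSpace.single j 1⟫ = 2 := by
    rw [inner_add_left, inner_add_right, inner_add_right, single_inner_single',
      single_inner_single', single_inner_single', single_inner_single']
    simp [h, h.symm]; norm_num
  rw [coroot, this]; norm_num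

lemma coroot_single' (i : Fin m) :
    coroot (EuclideanSpace.single i (1:ℝ)) = (2:ℝ) • EuclideanSpace.single i (1:ℝ) := by
  rw [coroot, single_inner_single']; simp

lemma coroot_two_single' (i : Fin m) :
    coroot ((2:ℝ) • EuclideanSpace.single i (1:ℝ)) = EuclideanSpace.single i (1:ℝ) := by
  rw [coroot, real_inner_smul_left, real_inner_smul_right, single_inner_single']
  norm_num [smul_smul]

lemma tele' (f : ℕ → ℝ) (k : ℕ) :
    f 0 = (∑ j ∈ Finset.range k, (f j - f (j+1))) + f k := by
  rw [Finset.sum_range_sub' f k]; ring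

end Helpers

/-- for the classical root systems `A_n`, `B_n`, `C_n`, `D_n`, every
fundamental weight `ω_i` pairs at most `2` with the highest coroot `α₀∨`. -/
theorem classical_fundamental_weights_small :
    (∀ (n : ℕ) (i : Fin n) (ω : EuclideanSpace ℝ (Fin (n + 1))),
      (∑ j, ω j = 0) →
      (∀ j : Fin n,
        ⟪ω, coroot (EuclideanSpace.single j.castSucc (1 : ℝ) -
            EuclideanSpace.single j.succ 1)⟫ = if j = i then 1 else 0) →
      ⟪ω, coroot (EuclideanSpace.single (0 : Fin (n + 1)) (1 : ℝ) -
          EuclideanSpace.single (Fin.last n) 1)⟫ ≤ 2) ∧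
    (∀ (n : ℕ) (hn : 2 ≤ n) (i : Fin n) (ω : EuclideanSpace ℝ (Fin n)),
      (∀ j : Fin n, ⟪ω, coroot (stdSimpleB n j)⟫ = if j = i then 1 else 0) →
      ⟪ω, coroot (EuclideanSpace.single (⟨0, by omega⟩ : Fin n) (1 : ℝ))⟫ ≤ 2) ∧
    (∀ (n : ℕ) (hn : 2 ≤ n) (i : Fin n) (ω : EuclideanSpace ℝ (Fin n)),
      (∀ j : Fin n, ⟪ω, coroot (stdSimpleC n j)⟫ = if j = i then 1 else 0) →
      ⟪ω, EuclideanSpace.single (⟨0, by omega⟩ : Fin n) (1 : ℝ) +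
          EuclideanSpace.single (⟨1, by omega⟩ : Fin n) 1⟫ ≤ 2) ∧
    (∀ (n : ℕ) (hn : 3 ≤ n) (i : Fin n) (ω : EuclideanSpace ℝ (Fin n)),
      (∀ j : Fin n, ⟪ω, coroot (stdSimpleD n j)⟫ = if j = i then 1 else 0) →
      ⟪ω, EuclideanSpace.single (⟨0, by omega⟩ : Fin n) (1 : ℝ) +
          EuclideanSpace.single (⟨1, by omega⟩ : Fin n) 1⟫ ≤ 2) := by
  refine ⟨?_, ?_, ?_, ?_⟩
  · -- Type A
    intro n i ω hsum h
    have hn : 0 < n := i.pos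
    obtain ⟨f, hf⟩ : ∃ f : ℕ → ℝ, ∀ (k) (hk : k < n + 1), f k = ω ⟨k, hk⟩ :=
      ⟨fun k => if hk : k < n + 1 then ω ⟨k, hk⟩ else 0, fun k hk => dif_pos hk⟩
    have key : ∀ k ∈ Finset.range n, f k - f (k+1) = (if k = (i:ℕ) then (1:ℝ) else 0) := by
      intro k hk
      rw [Finset.mem_range] at hk
      have hh := h ⟨k, hk⟩
      rw [coroot_sub' _ _ (by simp [Fin.ext_iff])] at hh
      rw [inner_sub_right, inner_single', inner_single'] at hh
      rw [hf k (by omega), hf (k+1) (by omega)]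
      simpa [Fin.ext_iff] using hh
    rw [coroot_sub' _ _ (by simp [Fin.ext_iff]; omega), inner_sub_right, inner_single',
      inner_single']
    have e0 : ω 0 = f 0 := by rw [hf 0 (by omega)]; exact congrArg ω.ofLp (Fin.ext (by simp))
    have en : ω (Fin.last n) = f n := by rw [hf n (by omega)]; exact congrArg ω.ofLp (Fin.ext (by simp))
    have := tele' f n
    rw [Finset.sum_congr rfl key, Finset.sum_ite_eq' (Finset.range n) (i:ℕ) (fun _ => (1:ℝ)),
      if_pos (Finset.mem_range.mpr i.isLt)] at this
    rw [e0, en]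
    linarith
  · -- Type B
    intro n hn i ω h
    obtain ⟨f, hf⟩ : ∃ f : ℕ → ℝ, ∀ (k) (hk : k < n), f k = ω ⟨k, hk⟩ :=
      ⟨fun k => if hk : k < n then ω ⟨k, hk⟩ else 0, fun k hk => dif_pos hk⟩
    have key : ∀ k ∈ Finset.range (n-1), f k - f (k+1) = (if k = (i:ℕ) then (1:ℝ) else 0) := by
      intro k hk
      rw [Finset.mem_range] at hk
      have hh := h ⟨k, by omega⟩
      rw [stdSimpleB, dif_pos (show (k:ℕ) + 1 < n by omega)] at hh
      rw [coroot_sub' _ _ (by simp [Fin.ext_iff]), inner_sub_right, inner_single',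
        inner_single'] at hh
      rw [hf k (by omega), hf (k+1) (by omega)]
      simpa [Fin.ext_iff] using hh
    have klast : 2 * f (n-1) = (if n - 1 = (i:ℕ) then (1:ℝ) else 0) := by
      have hh := h ⟨n-1, by omega⟩
      rw [stdSimpleB, dif_neg (show ¬ ((n-1:ℕ) + 1 < n) by omega)] at hh
      rw [coroot_single', real_inner_smul_right, inner_single'] at hh
      rw [hf (n-1) (by omega)]
      simpa [Fin.ext_iff] using hh
    rw [coroot_single', real_inner_smul_right, inner_single', ← hf 0 (by omega)]
    have := tele' f (n-1)
    rw [Finset.sum_congr rfl key,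
      Finset.sum_ite_eq' (Finset.range (n-1)) (i:ℕ) (fun _ => (1:ℝ))] at this
    have hi := i.isLt
    split_ifs at this klast <;> first | omega | (rw [Finset.mem_range] at *; omega) | linarith
  · -- Type C
    intro n hn i ω h
    obtain ⟨f, hf⟩ : ∃ f : ℕ → ℝ, ∀ (k) (hk : k < n), f k = ω ⟨k, hk⟩ :=
      ⟨fun k => if hk : k < n then ω ⟨k, hk⟩ else 0, fun k hk => dif_pos hk⟩
    have key : ∀ k ∈ Finset.range (n-1), f k - f (k+1) = (if k = (i:ℕ) then (1:ℝ) else 0) := by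
      intro k hk
      rw [Finset.mem_range] at hk
      have hh := h ⟨k, by omega⟩
      rw [stdSimpleC, dif_pos (show (k:ℕ) + 1 < n by omega)] at hh
      rw [coroot_sub' _ _ (by simp [Fin.ext_iff]), inner_sub_right, inner_single',
        inner_single'] at hh
      rw [hf k (by omega), hf (k+1) (by omega)]
      simpa [Fin.ext_iff] using hh
    have klast : f (n-1) = (if n - 1 = (i:ℕ) then (1:ℝ) else 0) := by
      have hh := h ⟨n-1, by omega⟩
      rw [stdSimpleC, dif_neg (show ¬ ((n-1:ℕ) + 1 < n) by omega)] at hh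
      rw [coroot_two_single', inner_single'] at hh
      rw [hf (n-1) (by omega)]
      simpa [Fin.ext_iff] using hh
    have k0 := key 0 (Finset.mem_range.mpr (by omega))
    rw [inner_add_right, inner_single', inner_single', ← hf 0 (by omega), ← hf 1 (by omega)]
    have := tele' f (n-1)
    rw [Finset.sum_congr rfl key,
      Finset.sum_ite_eq' (Finset.range (n-1)) (i:ℕ) (fun _ => (1:ℝ))] at this
    have hi := i.isLt
    simp only [Finset.mem_range] at this
    split_ifs at this klast k0 <;> first | omega | linarith
  · -- Type D
    intro n hn i ω h
    obtain ⟨f, hf⟩ : ∃ f : ℕ → ℝ, ∀ (k) (hk : k < n), f k = ω ⟨k, hk⟩ :=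
      ⟨fun k => if hk : k < n then ω ⟨k, hk⟩ else 0, fun k hk => dif_pos hk⟩
    have key : ∀ k ∈ Finset.range (n-1), f k - f (k+1) = (if k = (i:ℕ) then (1:ℝ) else 0) := by
      intro k hk
      rw [Finset.mem_range] at hk
      have hh := h ⟨k, by omega⟩
      rw [stdSimpleD, dif_pos (show (k:ℕ) + 1 < n by omega)] at hh
      rw [coroot_sub' _ _ (by simp [Fin.ext_iff]), inner_sub_right, inner_single',
        inner_single'] at hh
      rw [hf k (by omega), hf (k+1) (by omega)]
      simpa [Fin.ext_iff] using hh
    have klast : f (n-2) + f (n-1) = (if n - 1 = (i:ℕ) then (1:ℝ) else 0) := by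
      have hh := h ⟨n-1, by omega⟩
      rw [stdSimpleD, dif_neg (show ¬ ((n-1:ℕ) + 1 < n) by omega)] at hh
      rw [coroot_add' _ _ (by simp [Fin.ext_iff]; omega), inner_add_right, inner_single',
        inner_single'] at hh
      rw [hf (n-2) (by omega), hf (n-1) (by omega)]
      have e : n - 1 - 1 = n - 2 := by omega
      simp only [e] at hh
      simpa [Fin.ext_iff] using hh
    have k0 := key 0 (Finset.mem_range.mpr (by omega))
    have k2 := key (n-2) (Finset.mem_range.mpr (by omega))
    have e2 : n - 2 + 1 = n - 1 := by omega
    rw [e2] at k2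
    rw [inner_add_right, inner_single', inner_single', ← hf 0 (by omega), ← hf 1 (by omega)]
    have := tele' f (n-2)
    rw [Finset.sum_congr rfl (fun k hk => key k (by
        rw [Finset.mem_range] at *; omega)),
      Finset.sum_ite_eq' (Finset.range (n-2)) (i:ℕ) (fun _ => (1:ℝ))] at this
    have hi := i.isLt
    simp only [Finset.mem_range] at this
    split_ifs at this klast k0 k2 <;> first | omega | linarith
end
end
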